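/- Let H be a Hopf algebra with invertible antipode S. A k-linear map ρ: M → M⊗H satisfies the type I compatibility h¹m⟨0⟩ ⊗ h²m⟨1⟩ = (h²m)⟨0⟩ ⊗ (h²m)⟨1⟩S²(h¹) for all h, m if and only if it satisfies the type II compatibility (hm)⟨0⟩ ⊗ (hm)⟨1⟩ = h²¹m⟨0⟩ ⊗ h²²m⟨1⟩S(h¹) for all h, m. -/

import Mathlib

open TensorProduct

noncomputable section

/-- A quasi-bialgebra over a field `k`. -/
structure QuasiBialgebra (k H : Type) [Field k] [Ring H] [Algebra k H] where
  comul : H →ₐ[k] H ⊗[k] H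
  counit : H →ₐ[k] k
  assocEl : (H ⊗[k] (H ⊗[k] H))ˣ
  counit_left : ∀ a : H,
    (Algebra.TensorProduct.lid k H)
      ((Algebra.TensorProduct.map counit (AlgHom.id k H)) (comul a)) = a
  counit_right : ∀ a : H,
    (Algebra.TensorProduct.rid k k H)
      ((Algebra.TensorProduct.map (AlgHom.id k H) counit) (comul a)) = a
  quasi_coassoc : ∀ a : H,
    (Algebra.TensorProduct.map (AlgHom.id k H) comul) (comul a)
      = (assocEl : H ⊗[k] (H ⊗[k] H))
        * (Algebra.TensorProduct.assoc k k k H H H)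
            ((Algebra.TensorProduct.map comul (AlgHom.id k H)) (comul a))
        * ((assocEl⁻¹ : (H ⊗[k] (H ⊗[k] H))ˣ) : H ⊗[k] (H ⊗[k] H))
  counit_mid_assocEl :
    (Algebra.TensorProduct.map (AlgHom.id k H)
      (((Algebra.TensorProduct.lid k H).toAlgHom).comp
        (Algebra.TensorProduct.map counit (AlgHom.id k H))))
      (assocEl : H ⊗[k] (H ⊗[k] H)) = 1
  pentagon :
    (Algebra.TensorProduct.map (AlgHom.id k H)
       (Algebra.TensorProduct.map (AlgHom.id k H) comul))
      (assocEl : H ⊗[k] (H ⊗[k] H))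
    * (Algebra.TensorProduct.assoc k k k H H (H ⊗[k] H))
        ((Algebra.TensorProduct.map comul (AlgHom.id k (H ⊗[k] H)))
          (assocEl : H ⊗[k] (H ⊗[k] H)))
    = (Algebra.TensorProduct.includeRight (R := k) (A := H)
        (assocEl : H ⊗[k] (H ⊗[k] H)))
      * (Algebra.TensorProduct.map (AlgHom.id k H)
           (Algebra.TensorProduct.assoc k k k H H H).toAlgHom)
          ((Algebra.TensorProduct.map (AlgHom.id k H)
             (Algebra.TensorProduct.map comul (AlgHom.id k H)))
            (assocEl : H ⊗[k] (H ⊗[k] H)))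
      * (Algebra.TensorProduct.map (AlgHom.id k H)
           (Algebra.TensorProduct.assoc k k k H H H).toAlgHom)
          ((Algebra.TensorProduct.assoc k k k H (H ⊗[k] H) H)
            ((Algebra.TensorProduct.includeLeft (R := k) (S := k))
              (assocEl : H ⊗[k] (H ⊗[k] H))))

/-- A quasi-Hopf algebra over a field `k`, with invertible antipode. -/
structure QuasiHopf (k H : Type) [Field k] [Ring H] [Algebra k H]
    extends QuasiBialgebra k H where
  S : H →ₗ[k] H
  S_one : S 1 = 1
  S_mul : ∀ a b : H, S (a * b) = S b * S a
  S_bij : Function.Bijective S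
  alpha : H
  beta : H
  antipode_left : ∀ h : H,
    ((LinearMap.mul' k H).comp
      (TensorProduct.map ((LinearMap.mulRight k alpha).comp S) LinearMap.id))
      (comul h) = counit h • alpha
  antipode_right : ∀ h : H,
    ((LinearMap.mul' k H).comp
      (TensorProduct.map LinearMap.id ((LinearMap.mulLeft k beta).comp S)))
      (comul h) = counit h • beta
  phi_antipode :
    ((LinearMap.mul' k H).comp ((LinearMap.mul' k H).lTensor H))
      ((TensorProduct.map LinearMap.id
        (TensorProduct.map ((LinearMap.mulLeft k beta).comp S)
          (LinearMap.mulLeft k alpha)))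
        (assocEl : H ⊗[k] (H ⊗[k] H))) = 1
  phiInv_antipode :
    ((LinearMap.mul' k H).comp ((LinearMap.mul' k H).lTensor H))
      ((TensorProduct.map S
        (TensorProduct.map (LinearMap.mulLeft k alpha)
          (LinearMap.mulLeft k beta)))
        (((assocEl⁻¹ : (H ⊗[k] (H ⊗[k] H))ˣ) : H ⊗[k] (H ⊗[k] H)))) = 1

variable {k H : Type} [Field k] [Ring H] [Algebra k H]

/-- The diagonal action map of `H` on the tensor product of two `H`-modules
(given by representations into `Module.End`): `h · (m ⊗ n) = h¹ m ⊗ h² n`.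
A priori this is only a linear map into the endomorphisms. -/
def QuasiBialgebra.tAct (Q : QuasiBialgebra k H) {M N : Type}
    [AddCommGroup M] [Module k M] [AddCommGroup N] [Module k N]
    (f : H →ₗ[k] Module.End k M) (g : H →ₗ[k] Module.End k N) :
    H →ₗ[k] Module.End k (M ⊗[k] N) :=
  (TensorProduct.homTensorHomMap (RingHom.id k) M N M N).comp
    ((TensorProduct.map f g).comp Q.comul.toLinearMap)

/-- The componentwise action of an element of `H ⊗ (H ⊗ H)` on `M ⊗ (N ⊗ L)`. -/
def actTriple {M N L : Type}
    [AddCommGroup M] [Module k M] [AddCommGroup N] [Module k N]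
    [AddCommGroup L] [Module k L]
    (f : H →ₗ[k] Module.End k M) (g : H →ₗ[k] Module.End k N)
    (e : H →ₗ[k] Module.End k L) :
    H ⊗[k] (H ⊗[k] H) →ₗ[k] Module.End k (M ⊗[k] (N ⊗[k] L)) :=
  (TensorProduct.homTensorHomMap (RingHom.id k) M (N ⊗[k] L) M (N ⊗[k] L)).comp
    (TensorProduct.map f
      ((TensorProduct.homTensorHomMap (RingHom.id k) N L N L).comp
        (TensorProduct.map g e)))

/-- The trivial representation of `H` on `k`, via the counit. -/
def QuasiBialgebra.trivRep (Q : QuasiBialgebra k H) :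
    H →ₐ[k] Module.End k k :=
  (Algebra.lmul k k).comp Q.counit

/-- Equivariance of a linear map with respect to two (linear) actions of `H`. -/
def LinEquivariant {k H : Type} [Field k] [Ring H] [Algebra k H]
    {V W : Type} [AddCommGroup V] [Module k V] [AddCommGroup W] [Module k W]
    (ρV : H →ₗ[k] Module.End k V) (ρW : H →ₗ[k] Module.End k W)
    (f : V →ₗ[k] W) : Prop :=
  ∀ (h : H) (v : V), f (ρV h v) = ρW h (f v)

/-- The left internal Hom action of `H` on `Hom_k(M,N)`:
`(h · φ)(m) = h¹ φ(S(h²) m)`. -/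
def QuasiHopf.homLAct (Qh : QuasiHopf k H) {M N : Type}
    [AddCommGroup M] [Module k M] [AddCommGroup N] [Module k N]
    (ρM : H →ₐ[k] Module.End k M) (ρN : H →ₐ[k] Module.End k N) :
    H →ₗ[k] Module.End k (M →ₗ[k] N) :=
  (TensorProduct.lift
    (LinearMap.mk₂ k
      (fun a b => (LinearMap.llcomp k M N N (ρN a)).comp
          (LinearMap.lcomp k N (ρM (Qh.S b))))
      (fun a a' b => by ext φ m; simp [map_add]
      )
      (fun c a b => by ext φ m; simp [map_smul]
      )
      (fun a b b' => by ext φ m; simp [map_add]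
      )
      (fun c a b => by ext φ m; simp [map_smul]
      ))).comp Qh.comul.toLinearMap

/-- The right internal Hom action of `H` on `Hom_k(M,N)`:
`(h · φ)(m) = h² φ(S⁻¹(h¹) m)`, where `Sinv` is the inverse of the antipode. -/
def QuasiHopf.homRAct (Qh : QuasiHopf k H) (Sinv : H →ₗ[k] H) {M N : Type}
    [AddCommGroup M] [Module k M] [AddCommGroup N] [Module k N]
    (ρM : H →ₐ[k] Module.End k M) (ρN : H →ₐ[k] Module.End k N) :
    H →ₗ[k] Module.End k (M →ₗ[k] N) :=
  (TensorProduct.lift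
    (LinearMap.mk₂ k
      (fun a b => (LinearMap.llcomp k M N N (ρN b)).comp
          (LinearMap.lcomp k N (ρM (Sinv a))))
      (fun a a' b => by ext φ m; simp [map_add]
      )
      (fun c a b => by ext φ m; simp [map_smul]
      )
      (fun a b b' => by ext φ m; simp [map_add]
      )
      (fun c a b => by ext φ m; simp [map_smul]
      ))).comp Qh.comul.toLinearMap

/-- `S²` as an algebra endomorphism of a quasi-Hopf algebra. -/
def QuasiHopf.S2 (Qh : QuasiHopf k H) : H →ₐ[k] H where
  toFun h := Qh.S (Qh.S h)
  map_one' := by simp [Qh.S_one]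
  map_mul' a b := by simp [Qh.S_mul]
  map_zero' := by simp
  map_add' a b := by simp
  commutes' c := by
    simp [Algebra.algebraMap_eq_smul_one, map_smul, Qh.S_one]

/-- The `#`-twist of a module: the same underlying space, with the action
`h · v = S²(h) v`. -/
def QuasiHopf.hashRep (Qh : QuasiHopf k H) {V : Type}
    [AddCommGroup V] [Module k V]
    (ρV : H →ₐ[k] Module.End k V) : H →ₐ[k] Module.End k V :=
  ρV.comp Qh.S2

open Finset in
/-- The type-I anti-Yetter–Drinfeld compatibility condition
`h¹ m⟨0⟩ ⊗ h² m⟨1⟩ = (h² m)⟨0⟩ ⊗ (h² m)⟨1⟩ S²(h¹)`, expressed using arbitrary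
finite decompositions of the coproduct. -/
def QuasiHopf.CompatI (Qh : QuasiHopf k H) {M : Type}
    [AddCommGroup M] [Module k M]
    (ρM : H →ₐ[k] Module.End k M) (coact : M →ₗ[k] M ⊗[k] H) : Prop :=
  ∀ (h : H) (m : M) (ι : Type) (s : Finset ι) (h1 h2 : ι → H),
    Qh.comul h = ∑ i ∈ s, h1 i ⊗ₜ[k] h2 i →
    ∑ i ∈ s, (TensorProduct.map (ρM (h1 i)) (LinearMap.mulLeft k (h2 i)))
        (coact m)
      = ∑ i ∈ s,
          (LinearMap.lTensor M
            (LinearMap.mulRight k (Qh.S (Qh.S (h1 i)))))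
            (coact (ρM (h2 i) m))

/-- The family of maps `τ_V : V^# ⊗ M → M ⊗ V`, `v ⊗ m ↦ m⟨0⟩ ⊗ m⟨1⟩ v`,
associated to a coaction `ρ : M → M ⊗ H`. -/
def QuasiHopf.tauOfCoact (Qh : QuasiHopf k H) {M : Type}
    [AddCommGroup M] [Module k M] (coact : M →ₗ[k] M ⊗[k] H)
    (V : Type) [AddCommGroup V] [Module k V]
    (ρV : H →ₐ[k] Module.End k V) : V ⊗[k] M →ₗ[k] M ⊗[k] V :=
  TensorProduct.lift
    (LinearMap.mk₂ k
      (fun v m =>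
        (LinearMap.lTensor M ((ρV.toLinearMap :
            H →ₗ[k] V →ₗ[k] V).flip v)) (coact m))
      (fun v v' m => by
        simp [map_add, LinearMap.lTensor_add, LinearMap.add_apply])
      (fun c v m => by
        simp [map_smul, LinearMap.lTensor_smul, LinearMap.smul_apply])
      (fun v m m' => by simp [map_add])
      (fun c v m => by simp [map_smul]))

/-- The coaction `m ↦ τ_H(1 ⊗ m)` associated to a centralizing family `τ`. -/
def QuasiHopf.coactOfTau (Qh : QuasiHopf k H) {M : Type}
    [AddCommGroup M] [Module k M]
    (τ : ∀ (V : Type) [AddCommGroup V] [Module k V],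
      (H →ₐ[k] Module.End k V) → (V ⊗[k] M →ₗ[k] M ⊗[k] V)) :
    M →ₗ[k] M ⊗[k] H :=
  (τ H (Algebra.lmul k H)).comp ((TensorProduct.mk k H M) 1)

/-- A family `τ_V : V ▷ M → M ◁ V` (with `V ▷ M = V^# ⊗ M`, `M ◁ V = M ⊗ V`)
is a natural transformation: each component is `H`-equivariant, and the family
is natural in `V`. -/
def QuasiHopf.IsCentralFam (Qh : QuasiHopf k H) {M : Type}
    [AddCommGroup M] [Module k M] (ρM : H →ₐ[k] Module.End k M)
    (τ : ∀ (V : Type) [AddCommGroup V] [Module k V],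
      (H →ₐ[k] Module.End k V) → (V ⊗[k] M →ₗ[k] M ⊗[k] V)) : Prop :=
  (∀ (V : Type) [AddCommGroup V] [Module k V]
      (ρV : H →ₐ[k] Module.End k V),
    LinEquivariant (Qh.tAct (Qh.hashRep ρV).toLinearMap ρM.toLinearMap)
      (Qh.tAct ρM.toLinearMap ρV.toLinearMap) (τ V ρV)) ∧
  (∀ (V : Type) [AddCommGroup V] [Module k V]
      (ρV : H →ₐ[k] Module.End k V)
      (W : Type) [AddCommGroup W] [Module k W]
      (ρW : H →ₐ[k] Module.End k W)
      (f : V →ₗ[k] W),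
    LinEquivariant ρV.toLinearMap ρW.toLinearMap f →
    (τ W ρW).comp (LinearMap.rTensor M f)
      = (LinearMap.lTensor M f).comp (τ V ρV))

/-- The componentwise action of an element of `H ⊗ H` on `M ⊗ H`, where the
second factor acts by left multiplication. -/
def QuasiHopf.diagActMH (Qh : QuasiHopf k H) {M : Type}
    [AddCommGroup M] [Module k M] (ρM : H →ₐ[k] Module.End k M) :
    H ⊗[k] H →ₗ[k] Module.End k (M ⊗[k] H) :=
  (TensorProduct.homTensorHomMap (RingHom.id k) M H M H).comp
    (TensorProduct.map ρM.toLinearMap (LinearMap.mul k H))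

/-- The action of `H` on `M ⊗^r H`:
`x · (m ⊗ h) = x²¹ m ⊗ x²² h S(x¹)`. -/
def QuasiHopf.rTensorHopfAct (Qh : QuasiHopf k H) {M : Type}
    [AddCommGroup M] [Module k M] (ρM : H →ₐ[k] Module.End k M) :
    H →ₗ[k] Module.End k (M ⊗[k] H) :=
  (TensorProduct.lift
    (LinearMap.mk₂ k
      (fun a b =>
        (Qh.diagActMH ρM (Qh.comul b)).comp
          (LinearMap.lTensor M (LinearMap.mulRight k (Qh.S a))))
      (fun a a' b => by
        ext m x
        simp [map_add, mul_add, TensorProduct.tmul_add])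
      (fun c a b => by
        ext m x
        simp [map_smul, TensorProduct.tmul_smul])
      (fun a b b' => by
        simp [map_add, LinearMap.add_comp])
      (fun c a b => by
        simp [map_smul, LinearMap.smul_comp]))).comp Qh.comul.toLinearMap

open Finset in
/-- The type-II anti-Yetter–Drinfeld compatibility condition
`(h m)[0] ⊗ (h m)[1] = h²¹ m[0] ⊗ h²² m[1] S(h¹)`, expressed using arbitrary
finite decompositions of the coproduct. -/
def QuasiHopf.CompatII (Qh : QuasiHopf k H) {M : Type}
    [AddCommGroup M] [Module k M]
    (ρM : H →ₐ[k] Module.End k M) (coact : M →ₗ[k] M ⊗[k] H) : Prop :=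
  ∀ (h : H) (m : M) (ι : Type) (s : Finset ι) (h1 h2 : ι → H),
    Qh.comul h = ∑ i ∈ s, h1 i ⊗ₜ[k] h2 i →
    coact (ρM h m)
      = ∑ i ∈ s,
          (Qh.diagActMH ρM (Qh.comul (h2 i)))
            ((LinearMap.lTensor M (LinearMap.mulRight k (Qh.S (h1 i))))
              (coact m))

/-! ### Auxiliary lemmas for Statement 17 -/

section AuxAYD

open Finset

variable {M : Type} [AddCommGroup M] [Module k M]

private lemma mulRight_add' (x y : H) :
    LinearMap.mulRight k (x + y) = LinearMap.mulRight k x + LinearMap.mulRight k y :=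
  LinearMap.ext fun z => mul_add z x y

private lemma mulRight_smul' (c : k) (x : H) :
    LinearMap.mulRight k (c • x) = c • LinearMap.mulRight k x :=
  LinearMap.ext fun z => mul_smul_comm c z x

private lemma diagActMH_tmul (Qh : QuasiHopf k H) (ρM : H →ₐ[k] Module.End k M)
    (e f : H) :
    Qh.diagActMH ρM (e ⊗ₜ[k] f) = TensorProduct.map (ρM e) (LinearMap.mulLeft k f) := by
  have hmul : LinearMap.mul k H f = LinearMap.mulLeft k f := LinearMap.ext fun x => rfl
  simp [QuasiHopf.diagActMH, TensorProduct.homTensorHomMap_apply, hmul]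

private lemma diag_lTensor_comm (Qh : QuasiHopf k H) (ρM : H →ₐ[k] Module.End k M)
    (w : H ⊗[k] H) (u : H) (z : M ⊗[k] H) :
    Qh.diagActMH ρM w (LinearMap.lTensor M (LinearMap.mulRight k u) z)
      = LinearMap.lTensor M (LinearMap.mulRight k u) (Qh.diagActMH ρM w z) := by
  induction w using TensorProduct.induction_on with
  | zero => simp
  | tmul e f =>
    rw [diagActMH_tmul]
    induction z using TensorProduct.induction_on with
    | zero => simp
    | tmul n x => simp [mul_assoc]
    | add z1 z2 ih1 ih2 => simp only [map_add, ih1, ih2]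
  | add w1 w2 ih1 ih2 => simp only [map_add, LinearMap.add_apply, ih1, ih2]

private def Wmap (Qh : QuasiHopf k H) (ρM : H →ₐ[k] Module.End k M)
    (coact : M →ₗ[k] M ⊗[k] H) (m : M) : H ⊗[k] H →ₗ[k] M ⊗[k] H :=
  TensorProduct.lift (LinearMap.mk₂ k
    (fun u v => LinearMap.lTensor M (LinearMap.mulRight k (Qh.S u)) (coact (ρM v m)))
    (fun u u' v => by
      rw [map_add, mulRight_add', LinearMap.lTensor_add, LinearMap.add_apply])
    (fun c u v => by
      rw [map_smul, mulRight_smul', LinearMap.lTensor_smul, LinearMap.smul_apply])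
    (fun u v v' => by rw [map_add, LinearMap.add_apply, map_add, map_add])
    (fun c u v => by rw [map_smul, LinearMap.smul_apply, map_smul, map_smul]))

private lemma Wmap_tmul (Qh : QuasiHopf k H) (ρM : H →ₐ[k] Module.End k M)
    (coact : M →ₗ[k] M ⊗[k] H) (m : M) (u v : H) :
    Wmap Qh ρM coact m (u ⊗ₜ[k] v)
      = LinearMap.lTensor M (LinearMap.mulRight k (Qh.S u)) (coact (ρM v m)) := by
  simp [Wmap]

private def Rmap (Qh : QuasiHopf k H) (ρM : H →ₐ[k] Module.End k M)
    (coact : M →ₗ[k] M ⊗[k] H) (m : M) : H ⊗[k] H →ₗ[k] M ⊗[k] H :=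
  TensorProduct.lift (LinearMap.mk₂ k
    (fun u v => Qh.diagActMH ρM (Qh.comul v)
      (LinearMap.lTensor M (LinearMap.mulRight k (Qh.S u)) (coact m)))
    (fun u u' v => by
      rw [map_add, mulRight_add', LinearMap.lTensor_add, LinearMap.add_apply, map_add])
    (fun c u v => by
      rw [map_smul, mulRight_smul', LinearMap.lTensor_smul, LinearMap.smul_apply, map_smul])
    (fun u v v' => by rw [map_add, map_add, LinearMap.add_apply])
    (fun c u v => by rw [map_smul, map_smul, LinearMap.smul_apply]))

private lemma Rmap_tmul (Qh : QuasiHopf k H) (ρM : H →ₐ[k] Module.End k M)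
    (coact : M →ₗ[k] M ⊗[k] H) (m : M) (u v : H) :
    Rmap Qh ρM coact m (u ⊗ₜ[k] v)
      = Qh.diagActMH ρM (Qh.comul v)
          (LinearMap.lTensor M (LinearMap.mulRight k (Qh.S u)) (coact m)) := by
  simp [Rmap]

private def Gmap (Qh : QuasiHopf k H) : H ⊗[k] (H ⊗[k] H) →ₗ[k] H ⊗[k] H :=
  (LinearMap.rTensor H (LinearMap.mul' k H)).comp
    (((TensorProduct.assoc k H H H).symm.toLinearMap).comp
      (LinearMap.lTensor H (LinearMap.rTensor H Qh.S)))

private lemma Gmap_tmul (Qh : QuasiHopf k H) (x y z : H) :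
    Gmap Qh (x ⊗ₜ[k] (y ⊗ₜ[k] z)) = (x * Qh.S y) ⊗ₜ[k] z := by
  simp [Gmap]

private def Gmap' (Qh : QuasiHopf k H) : H ⊗[k] (H ⊗[k] H) →ₗ[k] H ⊗[k] H :=
  (LinearMap.rTensor H (LinearMap.mul' k H)).comp
    (((TensorProduct.assoc k H H H).symm.toLinearMap).comp
      (LinearMap.rTensor (H ⊗[k] H) Qh.S))

private lemma Gmap'_tmul (Qh : QuasiHopf k H) (x y z : H) :
    Gmap' Qh (x ⊗ₜ[k] (y ⊗ₜ[k] z)) = (Qh.S x * y) ⊗ₜ[k] z := by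
  simp [Gmap']

private lemma counit_sum (Qh : QuasiHopf k H) {h : H} {ι : Type} {s : Finset ι}
    {a b : ι → H} (hΔ : Qh.comul h = ∑ i ∈ s, a i ⊗ₜ[k] b i) :
    ∑ i ∈ s, Qh.counit (a i) • b i = h := by
  have key := Qh.counit_left h
  rw [hΔ] at key
  simpa [map_sum] using key

private lemma anti_right_sum (Qh : QuasiHopf k H) (hbeta : Qh.beta = 1) {h : H}
    {ι : Type} {s : Finset ι} {a b : ι → H}
    (hΔ : Qh.comul h = ∑ i ∈ s, a i ⊗ₜ[k] b i) :
    ∑ i ∈ s, a i * Qh.S (b i) = Qh.counit h • 1 := by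
  have key := Qh.antipode_right h
  rw [hbeta, hΔ] at key
  simpa [map_sum, LinearMap.mul'_apply] using key

private lemma anti_left_sum (Qh : QuasiHopf k H) (halpha : Qh.alpha = 1) {h : H}
    {ι : Type} {s : Finset ι} {a b : ι → H}
    (hΔ : Qh.comul h = ∑ i ∈ s, a i ⊗ₜ[k] b i) :
    ∑ i ∈ s, Qh.S (a i) * b i = Qh.counit h • 1 := by
  have key := Qh.antipode_left h
  rw [halpha, hΔ] at key
  simpa [map_sum, LinearMap.mul'_apply] using key

private lemma coassoc_sum (Qh : QuasiHopf k H)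
    (hPhi : ((Qh.assocEl : (H ⊗[k] (H ⊗[k] H))ˣ) : H ⊗[k] (H ⊗[k] H)) = 1)
    {h : H} {ι : Type} {s : Finset ι} {a b : ι → H}
    (hΔ : Qh.comul h = ∑ i ∈ s, a i ⊗ₜ[k] b i)
    {t : ι → Finset (H × H)}
    (hcd : ∀ i, Qh.comul (b i) = ∑ p ∈ t i, p.1 ⊗ₜ[k] p.2)
    {u : ι → Finset (H × H)}
    (hpq : ∀ i, Qh.comul (a i) = ∑ l ∈ u i, l.1 ⊗ₜ[k] l.2) :
    ∑ i ∈ s, ∑ p ∈ t i, a i ⊗ₜ[k] (p.1 ⊗ₜ[k] p.2)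
      = ∑ i ∈ s, ∑ l ∈ u i, l.1 ⊗ₜ[k] (l.2 ⊗ₜ[k] b i) := by
  have hEl : Qh.assocEl = 1 := Units.ext hPhi
  have key := Qh.quasi_coassoc h
  rw [hPhi, hEl] at key
  simp only [inv_one, Units.val_one, one_mul, mul_one] at key
  rw [hΔ] at key
  simp only [map_sum, Algebra.TensorProduct.map_tmul, AlgHom.coe_id, id_eq, hcd, hpq,
    TensorProduct.tmul_sum, TensorProduct.sum_tmul, map_sum,
    Algebra.TensorProduct.assoc_tmul] at key
  exact key

private lemma lemA (Qh : QuasiHopf k H)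
    (hPhi : ((Qh.assocEl : (H ⊗[k] (H ⊗[k] H))ˣ) : H ⊗[k] (H ⊗[k] H)) = 1)
    (hbeta : Qh.beta = 1)
    {h : H} {ι : Type} {s : Finset ι} {h1 h2 : ι → H}
    (hΔ : Qh.comul h = ∑ i ∈ s, h1 i ⊗ₜ[k] h2 i)
    {t : ι → Finset (H × H)}
    (hcd : ∀ i, Qh.comul (h2 i) = ∑ p ∈ t i, p.1 ⊗ₜ[k] p.2) :
    ∑ i ∈ s, ∑ p ∈ t i, (h1 i * Qh.S p.1) ⊗ₜ[k] p.2 = (1 : H) ⊗ₜ[k] h := by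
  choose u hpq using fun i => TensorProduct.exists_finset (R := k) (Qh.comul (h1 i))
  have key := congrArg (Gmap Qh) (coassoc_sum Qh hPhi hΔ hcd hpq)
  simp only [map_sum, Gmap_tmul] at key
  rw [key]
  have step : ∀ i ∈ s, ∑ l ∈ u i, (l.1 * Qh.S l.2) ⊗ₜ[k] h2 i
      = Qh.counit (h1 i) • ((1 : H) ⊗ₜ[k] h2 i) := by
    intro i _
    rw [← TensorProduct.sum_tmul, anti_right_sum Qh hbeta (hpq i),
      ← TensorProduct.smul_tmul']
  rw [Finset.sum_congr rfl step]
  simp_rw [← TensorProduct.tmul_smul]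
  rw [← TensorProduct.tmul_sum, counit_sum Qh hΔ]

private lemma lemB (Qh : QuasiHopf k H)
    (hPhi : ((Qh.assocEl : (H ⊗[k] (H ⊗[k] H))ˣ) : H ⊗[k] (H ⊗[k] H)) = 1)
    (halpha : Qh.alpha = 1)
    {h : H} {ι : Type} {s : Finset ι} {h1 h2 : ι → H}
    (hΔ : Qh.comul h = ∑ i ∈ s, h1 i ⊗ₜ[k] h2 i)
    {t : ι → Finset (H × H)}
    (hcd : ∀ i, Qh.comul (h2 i) = ∑ p ∈ t i, p.1 ⊗ₜ[k] p.2) :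
    ∑ i ∈ s, ∑ p ∈ t i, (Qh.S (h1 i) * p.1) ⊗ₜ[k] p.2 = (1 : H) ⊗ₜ[k] h := by
  choose u hpq using fun i => TensorProduct.exists_finset (R := k) (Qh.comul (h1 i))
  have key := congrArg (Gmap' Qh) (coassoc_sum Qh hPhi hΔ hcd hpq)
  simp only [map_sum, Gmap'_tmul] at key
  rw [key]
  have step : ∀ i ∈ s, ∑ l ∈ u i, (Qh.S l.1 * l.2) ⊗ₜ[k] h2 i
      = Qh.counit (h1 i) • ((1 : H) ⊗ₜ[k] h2 i) := by
    intro i _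
    rw [← TensorProduct.sum_tmul, anti_left_sum Qh halpha (hpq i),
      ← TensorProduct.smul_tmul']
  rw [Finset.sum_congr rfl step]
  simp_rw [← TensorProduct.tmul_smul]
  rw [← TensorProduct.tmul_sum, counit_sum Qh hΔ]

end AuxAYD

/-- For a Hopf algebra `H` (a quasi-Hopf algebra with
trivial associator and `α = β = 1`) with invertible antipode, a `k`-linear
map `ρ : M → M ⊗ H` satisfies the type I compatibility
`h¹ m⟨0⟩ ⊗ h² m⟨1⟩ = (h² m)⟨0⟩ ⊗ (h² m)⟨1⟩ S²(h¹)` if and only if it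
satisfies the type II compatibility
`(h m)⟨0⟩ ⊗ (h m)⟨1⟩ = h²¹ m⟨0⟩ ⊗ h²² m⟨1⟩ S(h¹)`. -/
theorem hopf_typeI_iff_typeII
    (M : Type) [AddCommGroup M] [Module k M]
    (Qh : QuasiHopf k H)
    (hPhi : ((Qh.assocEl : (H ⊗[k] (H ⊗[k] H))ˣ) :
      H ⊗[k] (H ⊗[k] H)) = 1)
    (halpha : Qh.alpha = 1) (hbeta : Qh.beta = 1)
    (ρM : H →ₐ[k] Module.End k M) (coact : M →ₗ[k] M ⊗[k] H) :
    Qh.CompatI ρM coact ↔ Qh.CompatII ρM coact := by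
  constructor
  · -- I → II
    intro hI h m ι s h1 h2 hΔ
    choose t hcd using fun i => TensorProduct.exists_finset (R := k) (Qh.comul (h2 i))
    have step1 : ∀ i ∈ s,
        Qh.diagActMH ρM (Qh.comul (h2 i))
          ((LinearMap.lTensor M (LinearMap.mulRight k (Qh.S (h1 i)))) (coact m))
        = ∑ p ∈ t i, Wmap Qh ρM coact m ((h1 i * Qh.S p.1) ⊗ₜ[k] p.2) := by
      intro i _
      rw [diag_lTensor_comm]
      have expand : Qh.diagActMH ρM (Qh.comul (h2 i)) (coact m)
          = ∑ p ∈ t i, TensorProduct.map (ρM p.1) (LinearMap.mulLeft k p.2) (coact m) := by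
        rw [hcd i, map_sum, LinearMap.sum_apply]
        exact Finset.sum_congr rfl fun p _ => by rw [diagActMH_tmul]
      rw [expand, hI (h2 i) m (H × H) (t i) Prod.fst Prod.snd (hcd i), map_sum]
      refine Finset.sum_congr rfl fun p _ => ?_
      rw [Wmap_tmul, ← LinearMap.lTensor_comp_apply]
      congr 1
      rw [Qh.S_mul, LinearMap.mulRight_mul]
    calc coact (ρM h m)
        = Wmap Qh ρM coact m ((1 : H) ⊗ₜ[k] h) := by
          rw [Wmap_tmul, Qh.S_one, LinearMap.mulRight_one, LinearMap.lTensor_id,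
            LinearMap.id_apply]
      _ = Wmap Qh ρM coact m
            (∑ i ∈ s, ∑ p ∈ t i, (h1 i * Qh.S p.1) ⊗ₜ[k] p.2) := by
          rw [lemA Qh hPhi hbeta hΔ hcd]
      _ = ∑ i ∈ s, ∑ p ∈ t i, Wmap Qh ρM coact m ((h1 i * Qh.S p.1) ⊗ₜ[k] p.2) := by
          rw [map_sum]; exact Finset.sum_congr rfl fun i _ => by rw [map_sum]
      _ = _ := Finset.sum_congr rfl fun i hi => (step1 i hi).symm
  · -- II → I
    intro hII h m ι s h1 h2 hΔ
    choose t hcd using fun i => TensorProduct.exists_finset (R := k) (Qh.comul (h2 i))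
    have step1 : ∀ i ∈ s,
        (LinearMap.lTensor M (LinearMap.mulRight k (Qh.S (Qh.S (h1 i)))))
            (coact (ρM (h2 i) m))
          = ∑ p ∈ t i, Rmap Qh ρM coact m ((Qh.S (h1 i) * p.1) ⊗ₜ[k] p.2) := by
      intro i _
      rw [hII (h2 i) m (H × H) (t i) Prod.fst Prod.snd (hcd i), map_sum]
      refine Finset.sum_congr rfl fun p _ => ?_
      rw [Rmap_tmul, ← diag_lTensor_comm, ← LinearMap.lTensor_comp_apply]
      congr 2
      rw [Qh.S_mul, LinearMap.mulRight_mul]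
    calc ∑ i ∈ s,
          (TensorProduct.map (ρM (h1 i)) (LinearMap.mulLeft k (h2 i))) (coact m)
        = Qh.diagActMH ρM (Qh.comul h) (coact m) := by
          rw [hΔ, map_sum, LinearMap.sum_apply]
          exact Finset.sum_congr rfl fun i _ => by rw [diagActMH_tmul]
      _ = Rmap Qh ρM coact m ((1 : H) ⊗ₜ[k] h) := by
          rw [Rmap_tmul, Qh.S_one, LinearMap.mulRight_one, LinearMap.lTensor_id,
            LinearMap.id_apply]
      _ = Rmap Qh ρM coact m
            (∑ i ∈ s, ∑ p ∈ t i, (Qh.S (h1 i) * p.1) ⊗ₜ[k] p.2) := by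
          rw [lemB Qh hPhi halpha hΔ hcd]
      _ = ∑ i ∈ s, ∑ p ∈ t i, Rmap Qh ρM coact m ((Qh.S (h1 i) * p.1) ⊗ₜ[k] p.2) := by
          rw [map_sum]; exact Finset.sum_congr rfl fun i _ => by rw [map_sum]
      _ = _ := Finset.sum_congr rfl fun i hi => (step1 i hi).symm
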